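/- Let Γ be a finite connected 3-GNDB graph of diameter 2, and let ab be an edge of Γ with |W_{ab}| = 3|W_{ba}|. Then deg(a) = 3·deg(b). -/
import Mathlib


/-- The set of vertices closer to `a` than to `b`. -/
def closerSet {V : Type*} (G : SimpleGraph V) (a b : V) : Set V :=
  {x | G.dist x a < G.dist x b}

section Aux

variable {V : Type*} [Fintype V] [DecidableEq V] (G : SimpleGraph V) [DecidableRel G.Adj]

/-- Private neighbors of `u` with respect to `v`: neighbors of `u` other than `v`
that are not neighbors of `v`. -/
private def pn (u v : V) : Finset V :=
  Finset.univ.filter (fun x => G.Adj x u ∧ ¬ G.Adj x v ∧ x ≠ v)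

private lemma ediam_ne_top_aux (hdiam : G.diam = 2) : G.ediam ≠ ⊤ := by
  intro h
  rw [SimpleGraph.diam, h] at hdiam
  simp at hdiam

private lemma dist_eq_two_aux (hconn : G.Connected) (hdiam : G.diam = 2)
    {x y : V} (hne : x ≠ y) (hadj : ¬ G.Adj x y) : G.dist x y = 2 := by
  have h1 : G.dist x y ≤ 2 := hdiam ▸ SimpleGraph.dist_le_diam (ediam_ne_top_aux G hdiam)
  have h0 : 0 < G.dist x y := hconn.pos_dist_of_ne hne
  have h2 : G.dist x y ≠ 1 := fun h => hadj (SimpleGraph.dist_eq_one_iff_adj.mp h)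
  omega

private lemma closerSet_eq (hconn : G.Connected) (hdiam : G.diam = 2)
    {a b : V} (hab : G.Adj a b) :
    closerSet G a b = ↑(insert a (pn G a b)) := by
  ext x
  simp only [closerSet, Set.mem_setOf_eq, Finset.coe_insert, Set.mem_insert_iff,
    Finset.mem_coe, pn, Finset.mem_filter, Finset.mem_univ, true_and]
  constructor
  · intro h
    by_cases hxa : x = a
    · left; exact hxa
    · right
      by_cases hxb : x = b
      · subst hxb
        rw [SimpleGraph.dist_self] at h
        omega
      have hda : 0 < G.dist x a := hconn.pos_dist_of_ne hxa
      have hdb : G.dist x b ≤ 2 :=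
        hdiam ▸ SimpleGraph.dist_le_diam (ediam_ne_top_aux G hdiam)
      have hxa1 : G.dist x a = 1 := by omega
      have hxb2 : G.dist x b = 2 := by omega
      refine ⟨SimpleGraph.dist_eq_one_iff_adj.mp hxa1, ?_, hxb⟩
      intro hadj
      rw [SimpleGraph.dist_eq_one_iff_adj.mpr hadj] at hxb2
      omega
  · rintro (rfl | ⟨h1, h2, h3⟩)
    · rw [SimpleGraph.dist_self, SimpleGraph.dist_eq_one_iff_adj.mpr hab]
      omega
    · rw [SimpleGraph.dist_eq_one_iff_adj.mpr h1,
        dist_eq_two_aux G hconn hdiam h3 h2]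
      omega

private lemma closerSet_ncard (hconn : G.Connected) (hdiam : G.diam = 2)
    {a b : V} (hab : G.Adj a b) :
    (closerSet G a b).ncard = (pn G a b).card + 1 := by
  rw [closerSet_eq G hconn hdiam hab, Set.ncard_coe_finset,
    Finset.card_insert_of_notMem (by simp [pn])]

private lemma degree_decomp {u v : V} (huv : G.Adj u v) :
    G.degree u = 1 + (Finset.univ.filter (fun x => G.Adj x u ∧ G.Adj x v)).card
      + (pn G u v).card := by
  rw [← SimpleGraph.card_neighborFinset_eq_degree]
  have hset : G.neighborFinset u =
      insert v ((Finset.univ.filter (fun x => G.Adj x u ∧ G.Adj x v)) ∪ pn G u v) := by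
    ext x
    simp only [SimpleGraph.mem_neighborFinset, Finset.mem_insert, Finset.mem_union,
      Finset.mem_filter, Finset.mem_univ, true_and, pn]
    constructor
    · intro h
      by_cases hxv : x = v
      · left; exact hxv
      · right
        by_cases hxb : G.Adj x v
        · exact Or.inl ⟨h.symm, hxb⟩
        · exact Or.inr ⟨h.symm, hxb, hxv⟩
    · rintro (rfl | ⟨h1, _⟩ | ⟨h1, _⟩) <;> first | exact huv | exact h1.symm
  rw [hset, Finset.card_insert_of_notMem (by simp [pn]),
    Finset.card_union_of_disjoint (by
      simp only [Finset.disjoint_left, Finset.mem_filter, Finset.mem_univ, true_and, pn]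
      rintro x ⟨_, h2⟩ ⟨_, h3, _⟩
      exact h3 h2)]
  ring

private lemma edge_balance {u v : V} (huv : G.Adj u v) :
    G.degree u + (pn G v u).card = G.degree v + (pn G u v).card := by
  have hm : (Finset.univ.filter (fun x => G.Adj x u ∧ G.Adj x v))
      = (Finset.univ.filter (fun x => G.Adj x v ∧ G.Adj x u)) :=
    Finset.filter_congr (fun x _ => and_comm)
  rw [degree_decomp G huv, degree_decomp G huv.symm, hm]
  ring

end Aux

/-- Let `Γ` be a finite connected 3-GNDB graph of diameter 2, and let `ab` be an edge
with `|W_{ab}| = 3|W_{ba}|`. Then `deg(a) = 3 deg(b)`. -/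
theorem stmt_1 {V : Type*} [Fintype V] (G : SimpleGraph V) [DecidableRel G.Adj]
    (hconn : G.Connected)
    (hGNDB : ∃ γ : ℕ, 0 < γ ∧ ∀ a b : V, G.Adj a b →
      ({(closerSet G a b).ncard, (closerSet G b a).ncard} : Set ℕ) = {γ, 3 * γ})
    (hdiam : G.diam = 2)
    (a b : V) (hab : G.Adj a b)
    (hW : (closerSet G a b).ncard = 3 * (closerSet G b a).ncard) :
    G.degree a = 3 * G.degree b := by
  classical
  obtain ⟨γ, hγ, hG⟩ := hGNDB
  -- For every edge, the two private-neighbor counts (plus one) are γ and 3γ in some order.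
  have key : ∀ u v : V, G.Adj u v →
      ((pn G u v).card + 1 = γ ∧ (pn G v u).card + 1 = 3 * γ) ∨
      ((pn G u v).card + 1 = 3 * γ ∧ (pn G v u).card + 1 = γ) := by
    intro u v huv
    have hp := hG u v huv
    rw [closerSet_ncard G hconn hdiam huv, closerSet_ncard G hconn hdiam huv.symm] at hp
    have hpe := Set.ext_iff.mp hp
    have h1 := (hpe γ).mpr (Or.inl rfl)
    have h2 := (hpe (3 * γ)).mpr (Or.inr rfl)
    have h3 := (hpe ((pn G u v).card + 1)).mp (Or.inl rfl)
    simp only [Set.mem_insert_iff, Set.mem_singleton_iff] at h1 h2 h3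
    omega
  -- The graph is triangle-free.
  have htri : ∀ c : V, ¬ (G.Adj c a ∧ G.Adj c b) := by
    rintro c ⟨hca, hcb⟩
    have e1 := edge_balance G hab
    have e2 := edge_balance G hca.symm
    have e3 := edge_balance G hcb
    have k1 := key a b hab
    have k2 := key a c hca.symm
    have k3 := key c b hcb
    omega
  -- Hence a and b have no common neighbors.
  have hcom : (Finset.univ.filter (fun x => G.Adj x a ∧ G.Adj x b)) = ∅ := by
    refine Finset.filter_eq_empty_iff.mpr (fun x _ => ?_)
    exact htri x
  have hda := degree_decomp G hab
  have hdb := degree_decomp G hab.symm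
  have hcom' : (Finset.univ.filter (fun x => G.Adj x b ∧ G.Adj x a)) = ∅ := by
    refine Finset.filter_eq_empty_iff.mpr (fun x _ => ?_)
    intro h
    exact htri x ⟨h.2, h.1⟩
  rw [hcom] at hda
  rw [hcom'] at hdb
  rw [closerSet_ncard G hconn hdiam hab, closerSet_ncard G hconn hdiam hab.symm] at hW
  simp only [Finset.card_empty] at hda hdb
  omega
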